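/- arXiv:2007.05269 — 7 statements merged into one kernel-verified Lean document; each statement's English description precedes it below -/
import Mathlib

section
/- For all words x, x', v over Σ: (a) if x'/v ≠ ε then x·(x'/v) = (x·x')/v; and (b) if |x'| > |v| then x'/v ≠ ε. -/
open List
/-- `wpow u k` is the word `u` concatenated `k` times. -/
def wpow {β : Type*} (u : List β) (k : ℕ) : List β := (List.replicate k u).flatten

/-- Auxiliary residual operation, working on reversed words. -/
def resAux {α : Type*} [DecidableEq α] : List α → List α → List α
  | xr, [] => xr
  | [], _ :: _ => []
  | a :: xr, b :: vr => if a = b then resAux xr vr else resAux (a :: xr) vr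
termination_by xr vr => vr.length

/-- The residual `x / v`: the prefix of `x` obtained by removing from `x`
its longest suffix that is a subword of `v`. -/
def res {α : Type*} [DecidableEq α] (x v : List α) : List α :=
  (resAux x.reverse v.reverse).reverse

inductive Act (α : Type*) where
  | write : List α → Act α
  | read : List α → Act α

/-- written part -/
def wri {α : Type*} : List (Act α) → List α
  | [] => []
  | Act.write w :: σ => w ++ wri σ
  | Act.read _ :: σ => wri σ

/-- read part -/
def rea {α : Type*} : List (Act α) → List α
  | [] => []
  | Act.write _ :: σ => rea σ
  | Act.read w :: σ => w ++ rea σ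

/-- `pr σ x` : minimal `σ`-predecessor of `x` (processing `σ` right-to-left). -/
def pr {α : Type*} [DecidableEq α] : List (Act α) → List α → List α
  | [], x => x
  | Act.write v :: σ, x => res (pr σ x) v
  | Act.read u :: σ, x => u ++ pr σ x

/-- lossy step for a single channel action -/
def stepAct {α : Type*} : Act α → List α → List α → Prop
  | Act.write w, x, y => y <+ x ++ w
  | Act.read w, x, y => w ++ y <+ x

/-- lossy steps along a sequence of channel actions -/
def steps {α : Type*} : List (Act α) → List α → List α → Prop
  | [], x, y => x = y
  | θ :: σ, x, y => ∃ z, stepAct θ x z ∧ steps σ z y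

/-- `w` is a fractional power of `u` -/
def FracPow {α : Type*} (u w : List α) : Prop := ∃ k : ℕ, w <+: wpow u k

/-- `x ⊖ u` : remainder of `x` after reading the leftmost embedding of `u`. -/
def ominus {α : Type*} [DecidableEq α] : List α → List α → List α
  | x, [] => x
  | [], _ :: _ => []
  | a :: x, b :: u => if a = b then ominus x u else ominus x (b :: u)

/-- `σ` is increasing -/
def Increasing {α : Type*} (σ : List (Act α)) : Prop :=
  0 < (wri σ).length ∧
    wpow (rea σ) (wri σ).length <+ wpow (wri σ) ((wri σ).length - 1)



lemma resAux_append {α : Type*} [DecidableEq α] (xr : List α) :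
    ∀ vr xr' : List α, resAux xr' vr ≠ [] → resAux (xr' ++ xr) vr = resAux xr' vr ++ xr := by
  intro vr
  induction vr with
  | nil => intro xr' _; simp [resAux]
  | cons b vr ih =>
    intro xr' h
    match xr' with
    | [] => simp [resAux] at h
    | a :: xr'' =>
      by_cases hab : a = b
      · simp only [resAux, hab, if_true, cons_append] at h ⊢
        exact ih xr'' h
      · simp only [resAux, hab, if_false, cons_append] at h ⊢
        exact ih (a :: xr'') h

lemma resAux_ne_nil {α : Type*} [DecidableEq α] :
    ∀ vr xr : List α, vr.length < xr.length → resAux xr vr ≠ [] := by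
  intro vr
  induction vr with
  | nil =>
    intro xr h
    cases xr with
    | nil => simp at h
    | cons a xr => simp [resAux]
  | cons b vr ih =>
    intro xr h
    cases xr with
    | nil => simp at h
    | cons a xr =>
      by_cases hab : a = b
      · simp only [resAux, hab, if_true]
        exact ih xr (by simpa using h)
      · simp only [resAux, hab, if_false]
        exact ih (a :: xr) (by simp at h ⊢; omega)

/-- (a) if `x'/v ≠ ε` then `x·(x'/v) = (x·x')/v`;
(b) if `|x'| > |v|` then `x'/v ≠ ε`. -/
theorem residual_append_and_nonempty {α : Type*} [DecidableEq α]
    (x x' v : List α) :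
    (res x' v ≠ [] → x ++ res x' v = res (x ++ x') v) ∧
    (v.length < x'.length → res x' v ≠ []) := by
  constructor
  · intro h
    have h' : resAux x'.reverse v.reverse ≠ [] := by
      intro he; exact h (by simp [res, he])
    simp only [res, List.reverse_append]
    rw [resAux_append x.reverse v.reverse x'.reverse h', List.reverse_append,
      List.reverse_reverse]
  · intro h he
    have h' : resAux x'.reverse v.reverse ≠ [] :=
      resAux_ne_nil _ _ (by simpa using h)
    exact h' (by simpa [res] using he)
end

section
/- The residual operation is monotonic in its first argument and contramonotonic in its second argument: for all words u, u', v, v', x over Σ, if u ⊑ u' then u/v ⊑ u'/v, and if v ⊑ v' then x/v' ⊑ x/v. -/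
open List
lemma resAux_nil {α : Type*} [DecidableEq α] (xr : List α) : resAux xr [] = xr := by
  cases xr <;> simp [resAux]

lemma resAux_nil' {α : Type*} [DecidableEq α] (b : α) (vr : List α) :
    resAux [] (b :: vr) = [] := by simp [resAux]

lemma resAux_cons {α : Type*} [DecidableEq α] (a b : α) (xr vr : List α) :
    resAux (a :: xr) (b :: vr) =
      if a = b then resAux xr vr else resAux (a :: xr) vr := by
  rw [resAux]

lemma resAux_mono {α : Type*} [DecidableEq α] :
    ∀ (vr ur ur' : List α), ur <+ ur' → resAux ur vr <+ resAux ur' vr := by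
  intro vr
  induction vr with
  | nil => intro ur ur' h; simpa [resAux_nil] using h
  | cons b vr₀ ih =>
    have step : ∀ xr : List α, resAux xr (b :: vr₀) <+ resAux xr vr₀ := by
      intro xr
      cases xr with
      | nil => simp [resAux_nil']
      | cons a xr =>
        rw [resAux_cons]
        by_cases hab : a = b
        · simp only [hab, if_pos rfl]
          exact ih _ _ (List.sublist_cons_self b xr)
        · simp [hab]
    intro ur ur' h
    induction h with
    | slnil => exact List.Sublist.refl _
    | cons a' h ihh =>
      rename_i ur t
      rw [resAux_cons]
      by_cases hab : a' = b
      · simp only [if_pos hab]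
        exact (step ur).trans (ih _ _ h)
      · simp only [if_neg hab]
        exact (step ur).trans (ih _ _ (h.trans (List.sublist_cons_self a' t)))
    | cons_cons a h ihh =>
      rename_i s t
      rw [resAux_cons, resAux_cons]
      by_cases hab : a = b
      · simp only [if_pos hab]
        exact ih _ _ h
      · simp only [if_neg hab]
        exact ih _ _ (h.cons₂ a)

lemma resAux_anti {α : Type*} [DecidableEq α] :
    ∀ {vr vr' : List α}, vr <+ vr' → ∀ xr, resAux xr vr' <+ resAux xr vr := by
  intro vr vr' h
  induction h with
  | slnil => intro xr; exact List.Sublist.refl _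
  | cons b h ihh =>
    rename_i vr vr'
    intro xr
    have step : resAux xr (b :: vr') <+ resAux xr vr' := by
      cases xr with
      | nil => simp [resAux_nil']
      | cons a xr =>
        rw [resAux_cons]
        by_cases hab : a = b
        · subst hab
          simp only [if_pos rfl]
          exact resAux_mono _ _ _ (List.sublist_cons_self a xr)
        · simp [hab]
    exact step.trans (ihh xr)
  | cons_cons b h ihh =>
    intro xr
    cases xr with
    | nil => simp [resAux_nil']
    | cons a xr =>
      rw [resAux_cons, resAux_cons]
      by_cases hab : a = b
      · simp only [if_pos hab]; exact ihh xr
      · simp only [if_neg hab]; exact ihh (a :: xr)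

/-- the residual is monotonic in its first argument and
contramonotonic in its second argument. -/
theorem residual_mono {α : Type*} [DecidableEq α]
    (u u' v v' x : List α) :
    (u <+ u' → res u v <+ res u' v) ∧ (v <+ v' → res x v' <+ res x v) := by
  constructor
  · intro h
    exact (List.reverse_sublist).mpr
      (resAux_mono _ _ _ ((List.reverse_sublist).mpr h))
  · intro h
    exact (List.reverse_sublist).mpr
      (resAux_anti ((List.reverse_sublist).mpr h) _)
end

section
/- Correctness of the backward-reachability operator pr: for every sequence of channel actions σ over Σ and all words x, y, one has pr[σ](x) ⊑ y if and only if there exists a word z with y →^σ z and x ⊑ z. In other words, the set of σ-predecessors of the upward closure of x is exactly the upward closure of pr[σ](x). -/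
open List
lemma resAux_sublist_iff {α : Type*} [DecidableEq α] (xr vr w : List α) :
    resAux xr vr <+ w ↔ xr <+ vr ++ w := by
  induction xr, vr using resAux.induct with
  | case1 xr => simp [resAux]
  | case2 b vr => simp [resAux]
  | case3 xr b vr ih =>
      rw [resAux, if_pos rfl]
      simpa using ih
  | case4 a xr b vr h ih =>
      rw [resAux, if_neg h, ih]
      constructor
      · exact fun hs => hs.cons b
      · intro hs
        cases hs with
        | cons _ hs => exact hs
        | cons_cons _ hs => exact absurd rfl h

lemma res_sublist_iff {α : Type*} [DecidableEq α] (x v y : List α) :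
    res x v <+ y ↔ x <+ y ++ v := by
  unfold res
  conv_lhs => rw [← y.reverse_reverse]
  rw [List.reverse_sublist, resAux_sublist_iff, ← List.reverse_append,
    List.reverse_sublist]

theorem pr_correct' {α : Type*} [DecidableEq α]
    (σ : List (Act α)) (x y : List α) :
    pr σ x <+ y ↔ ∃ z : List α, steps σ y z ∧ x <+ z := by
  induction σ generalizing y with
  | nil =>
      constructor
      · exact fun h => ⟨y, rfl, h⟩
      · rintro ⟨z, rfl, h⟩; exact h
  | cons θ σ ih =>
      cases θ with
      | write v =>
          show res (pr σ x) v <+ y ↔ _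
          rw [res_sublist_iff]
          constructor
          · intro h
            obtain ⟨z, hs, hx⟩ := (ih (y ++ v)).mp h
            exact ⟨z, ⟨y ++ v, List.Sublist.refl _, hs⟩, hx⟩
          · rintro ⟨z, ⟨z', hz', hs⟩, hx⟩
            exact ((ih z').mpr ⟨z, hs, hx⟩).trans hz'
      | read u =>
          show u ++ pr σ x <+ y ↔ _
          constructor
          · intro h
            obtain ⟨z, hs, hx⟩ := (ih (pr σ x)).mp (List.Sublist.refl _)
            exact ⟨z, ⟨pr σ x, h, hs⟩, hx⟩
          · rintro ⟨z, ⟨z', hz', hs⟩, hx⟩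
            have : pr σ x <+ z' := (ih z').mpr ⟨z, hs, hx⟩
            exact (((List.Sublist.refl u).append this).trans hz')

/-- correctness of the backward-reachability operator `pr`:
`pr[σ](x) ⊑ y` iff some `z ⊒ x` satisfies `y →^σ z`. -/
theorem pr_correct {α : Type*} [DecidableEq α]
    (σ : List (Act α)) (x y : List α) :
    pr σ x <+ y ↔ ∃ z : List α, steps σ y z ∧ x <+ z := pr_correct' σ x y
end

section
/- Let σ be a sequence of channel actions over Σ and let u = rea(σ). If the word x is a fractional power of u, then pr[σ](x) is also a fractional power of u. -/
open List
lemma resAux_suffix {α : Type*} [DecidableEq α] (xr vr : List α) :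
    resAux xr vr <:+ xr := by
  induction vr generalizing xr with
  | nil => cases xr <;> simp [resAux]
  | cons b vr ih =>
    cases xr with
    | nil => simp [resAux]
    | cons a xr =>
      simp only [resAux]
      split
      · exact (ih xr).trans (List.suffix_cons a xr)
      · exact ih (a :: xr)

lemma res_prefix {α : Type*} [DecidableEq α] (x v : List α) : res x v <+: x := by
  have h := resAux_suffix x.reverse v.reverse
  rw [← List.reverse_prefix] at h
  simpa [res] using h

lemma pr_prefix {α : Type*} [DecidableEq α] (σ : List (Act α)) (x : List α) :
    pr σ x <+: rea σ ++ x := by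
  induction σ with
  | nil => simp [pr, rea]
  | cons θ σ ih =>
    cases θ with
    | write v => exact ((res_prefix _ v).trans ih)
    | read w =>
      simp only [pr, rea, List.append_assoc]
      exact ⟨_, by rw [List.append_assoc, ih.choose_spec]⟩

/-- if `x` is a fractional power of `u = rea(σ)` then so is `pr[σ](x)`. -/
theorem pr_fracPow {α : Type*} [DecidableEq α]
    (σ : List (Act α)) (x : List α) (h : FracPow (rea σ) x) :
    FracPow (rea σ) (pr σ x) := by
  obtain ⟨k, hk⟩ := h
  refine ⟨k + 1, (pr_prefix σ x).trans ?_⟩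
  have : wpow (rea σ) (k + 1) = rea σ ++ wpow (rea σ) k := by
    simp [wpow, List.replicate_succ]
  rw [this]
  obtain ⟨t, ht⟩ := hk
  exact ⟨t, by rw [List.append_assoc, ht]⟩
end

section
/- Let σ be a sequence of channel actions over Σ, u = rea(σ), let x be a fractional power of u, let n ∈ ℕ, and set y = pr[σ](u^n·x). If |y| > (n+1)·|u|, then y = u^n·pr[σ](x). -/
open List
lemma wpow_succ {β : Type*} (u : List β) (k : ℕ) : wpow u (k+1) = u ++ wpow u k := by
  simp [wpow, List.replicate_succ]

lemma length_wpow {β : Type*} (u : List β) (k : ℕ) : (wpow u k).length = k * u.length := by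
  induction k with
  | zero => simp [wpow]
  | succ k ih => simp [wpow_succ, ih]; ring

lemma wpow_rot {β : Type*} (a b : List β) (n : ℕ) :
    a ++ wpow (b ++ a) n = wpow (a ++ b) n ++ a := by
  induction n with
  | zero => simp [wpow]
  | succ n ih =>
    rw [wpow_succ, wpow_succ, ← List.append_assoc, ← List.append_assoc, List.append_assoc,
      ih, List.append_assoc]
    simp [List.append_assoc]

lemma resAux_length_le {α : Type*} [DecidableEq α] (xr vr : List α) :
    (resAux xr vr).length ≤ xr.length := by
  induction vr generalizing xr with
  | nil => simp [resAux]
  | cons b vr ih =>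
    cases xr with
    | nil => simp [resAux]
    | cons a xr =>
      simp only [resAux]
      split
      · exact le_trans (ih xr) (by simp)
      · exact ih (a :: xr)

lemma resAux_append_s7 {α : Type*} [DecidableEq α] (vr tr sr : List α)
    (h : sr.length < (resAux (tr ++ sr) vr).length) :
    resAux (tr ++ sr) vr = resAux tr vr ++ sr := by
  induction vr generalizing tr with
  | nil => simp [resAux]
  | cons b vr ih =>
    cases tr with
    | nil =>
      exfalso
      have := resAux_length_le sr (b :: vr)
      simp at h
      omega
    | cons a tr =>
      simp only [List.cons_append, resAux] at h ⊢
      split <;> rename_i hab <;> simp only [hab, if_true, if_false] at h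
      · exact ih tr h
      · exact ih (a :: tr) h

lemma res_append {α : Type*} [DecidableEq α] (s t v : List α)
    (h : s.length < (res (s ++ t) v).length) :
    res (s ++ t) v = s ++ res t v := by
  unfold res at h ⊢
  rw [List.reverse_append] at h ⊢
  rw [resAux_append_s7 _ _ _ (by simpa using h)]
  simp

lemma res_length_le {α : Type*} [DecidableEq α] (x v : List α) :
    (res x v).length ≤ x.length := by
  simpa [res] using resAux_length_le x.reverse v.reverse

lemma pr_main {α : Type*} [DecidableEq α] (n : ℕ) :
    ∀ (σ : List (Act α)) (p z : List α),
      n * (p ++ rea σ).length + (rea σ).length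
          < (pr σ (wpow (p ++ rea σ) n ++ z)).length →
      pr σ (wpow (p ++ rea σ) n ++ z) = wpow (rea σ ++ p) n ++ pr σ z := by
  intro σ
  induction σ with
  | nil => intro p z _; simp [pr, rea]
  | cons θ σ ih =>
    cases θ with
    | write v =>
      intro p z h
      simp only [pr, rea] at h ⊢
      have h1 : n * (p ++ rea σ).length + (rea σ).length
          < (pr σ (wpow (p ++ rea σ) n ++ z)).length :=
        lt_of_lt_of_le h (res_length_le _ _)
      rw [ih p z h1] at h ⊢
      apply res_append
      rw [length_wpow]
      simp only [List.length_append] at h ⊢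
      rw [Nat.add_comm (rea σ).length p.length]
      omega
    | read w =>
      intro p z h
      simp only [pr, rea] at h ⊢
      have hassoc : p ++ (w ++ rea σ) = (p ++ w) ++ rea σ := by simp
      rw [hassoc] at h ⊢
      have h1 : n * ((p ++ w) ++ rea σ).length + (rea σ).length
          < (pr σ (wpow ((p ++ w) ++ rea σ) n ++ z)).length := by
        simp only [List.length_append] at h ⊢
        omega
      rw [ih (p ++ w) z h1]
      have := wpow_rot w (rea σ ++ p) n
      simp only [List.append_assoc] at this ⊢
      rw [← List.append_assoc w, this, List.append_assoc]

/-- if `x` is a fractional power of `u = rea(σ)`, `y = pr[σ](uⁿ·x)` and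
`|y| > (n+1)·|u|`, then `y = uⁿ·pr[σ](x)`. -/
theorem pr_pump_down {α : Type*} [DecidableEq α]
    (σ : List (Act α)) (x : List α) (n : ℕ) (h : FracPow (rea σ) x)
    (hy : (n + 1) * (rea σ).length < (pr σ (wpow (rea σ) n ++ x)).length) :
    pr σ (wpow (rea σ) n ++ x) = wpow (rea σ) n ++ pr σ x := by
  have := pr_main n σ [] x (by simpa [Nat.succ_mul] using hy)
  simpa using this
end

section
/- Let σ be a sequence of channel actions over Σ and x a word. For every k ∈ ℕ there exist a word w that is a fractional power of rea(σ) and a prefix z of x such that pr[σ^k](x) = w·z. -/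
open List
lemma pr_append {α : Type*} [DecidableEq α] (σ₁ σ₂ : List (Act α)) (x : List α) :
    pr (σ₁ ++ σ₂) x = pr σ₁ (pr σ₂ x) := by
  induction σ₁ with
  | nil => simp [pr]
  | cons a σ ih => cases a <;> simp [pr, ih]

lemma prefix_append_cases {α : Type*} {p a b : List α} (h : p <+: a ++ b) :
    p <+: a ∨ ∃ t, t <+: b ∧ p = a ++ t := by
  rcases le_or_gt p.length a.length with hl | hl
  · exact Or.inl (List.prefix_of_prefix_length_le h (a.prefix_append b) hl)
  · right
    have ha : a <+: p :=
      List.prefix_of_prefix_length_le (a.prefix_append b) h hl.le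
    obtain ⟨t, rfl⟩ := ha
    exact ⟨t, (List.prefix_append_right_inj a).mp h, rfl⟩

/-- `pr[σ^k](x)` is a fractional power of `rea(σ)` followed by a
prefix of `x`. -/
theorem pr_iterate_shape {α : Type*} [DecidableEq α]
    (σ : List (Act α)) (x : List α) (k : ℕ) :
    ∃ w z : List α, FracPow (rea σ) w ∧ z <+: x ∧ pr (wpow σ k) x = w ++ z := by
  induction k with
  | zero => exact ⟨[], x, ⟨0, by simp [wpow]⟩, List.prefix_refl x, by simp [wpow, pr]⟩
  | succ k ih =>
    obtain ⟨w, z, ⟨j, hw⟩, hz, heq⟩ := ih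
    have hstep : wpow σ (k + 1) = σ ++ wpow σ k := by
      simp [wpow, List.replicate_succ]
    have hpre : pr (wpow σ (k + 1)) x <+: rea σ ++ (w ++ z) := by
      rw [hstep, pr_append, heq]; exact pr_prefix σ (w ++ z)
    have hreaw : rea σ ++ w <+: wpow (rea σ) (j + 1) := by
      have : wpow (rea σ) (j + 1) = rea σ ++ wpow (rea σ) j := by
        simp [wpow, List.replicate_succ]
      rw [this]; exact (List.prefix_append_right_inj (rea σ)).mpr hw
    rw [← List.append_assoc] at hpre
    rcases prefix_append_cases hpre with h | ⟨t, ht, hpe⟩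
    · exact ⟨pr (wpow σ (k + 1)) x, [], ⟨j + 1, h.trans hreaw⟩, by simp, by simp⟩
    · exact ⟨rea σ ++ w, t, ⟨j + 1, hreaw⟩, ht.trans hz, hpe⟩
end

section
/- Forward characterisation of lossy runs: for every sequence of channel actions σ over Σ and all words x, y, the following are equivalent: (1) there exists x' ⊑ x with x' →^σ y; (2) σ is enabled from x (i.e., there exists z with x →^σ z), rea(σ) ⊑ x·wri(σ), and y ⊑ (x·wri(σ)) ⊖ rea(σ). -/
open List
section AuxLemmas
variable {α : Type*} [DecidableEq α]

lemma ominus_nil (x : List α) : ominus x [] = x := by cases x <;> rfl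

lemma ominus_cons (a b : α) (x u : List α) :
    ominus (a :: x) (b :: u) = if a = b then ominus x u else ominus x (b :: u) := rfl

lemma ominus_append_right (w : List α) :
    ∀ (x u : List α), u <+ x → ominus (x ++ w) u = ominus x u ++ w
  | x, [], _ => by rw [ominus_nil, ominus_nil]
  | [], b :: u, h => by exact absurd h (by simp)
  | a :: x, b :: u, h => by
    by_cases hab : a = b
    · subst hab
      rw [List.cons_append, ominus_cons, ominus_cons, if_pos rfl, if_pos rfl]
      exact ominus_append_right w x u (List.cons_sublist_cons.mp h)
    · rw [List.cons_append, ominus_cons, ominus_cons, if_neg hab, if_neg hab]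
      cases h with
      | cons _ h' => exact ominus_append_right w x (b :: u) h'
      | cons_cons => exact absurd rfl hab

lemma ominus_append_left :
    ∀ (x u v : List α), u <+ x → ominus x (u ++ v) = ominus (ominus x u) v
  | x, [], v, _ => by rw [List.nil_append, ominus_nil]
  | [], b :: u, v, h => by exact absurd h (by simp)
  | a :: x, b :: u, v, h => by
    by_cases hab : a = b
    · subst hab
      rw [List.cons_append, ominus_cons, ominus_cons, if_pos rfl, if_pos rfl]
      exact ominus_append_left x u v (List.cons_sublist_cons.mp h)
    · rw [List.cons_append, ominus_cons, ominus_cons, if_neg hab, if_neg hab]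
      cases h with
      | cons _ h' => exact ominus_append_left x (b :: u) v h'
      | cons_cons => exact absurd rfl hab

lemma sublist_ominus :
    ∀ (s u v : List α), u ++ v <+ s → v <+ ominus s u
  | s, [], v, h => by rw [ominus_nil]; exact h
  | [], b :: u, v, h => by exact absurd h (by simp)
  | a :: s, b :: u, v, h => by
    rw [ominus_cons]
    by_cases hab : a = b
    · rw [if_pos hab]; subst hab
      cases h with
      | cons _ h' =>
        exact sublist_ominus s u v (((List.sublist_cons_self a _).trans h'))
      | cons_cons _ h' => exact sublist_ominus s u v h'
    · rw [if_neg hab]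
      cases h with
      | cons _ h' => exact sublist_ominus s (b :: u) v h'
      | cons_cons => exact absurd rfl hab

lemma append_ominus_sublist :
    ∀ (x u : List α), u <+ x → u ++ ominus x u <+ x
  | x, [], _ => by rw [ominus_nil, List.nil_append]
  | [], b :: u, h => by exact absurd h (by simp)
  | a :: x, b :: u, h => by
    rw [ominus_cons]
    by_cases hab : a = b
    · rw [if_pos hab]; subst hab
      exact (append_ominus_sublist x u (List.cons_sublist_cons.mp h)).cons₂ _
    · rw [if_neg hab]
      cases h with
      | cons _ h' => exact (append_ominus_sublist x (b :: u) h').cons a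
      | cons_cons => exact absurd rfl hab

lemma steps_mono (σ : List (Act α)) (z z₂ y : List α) (h : steps σ z y) (hz : z <+ z₂) :
    ∃ y', y <+ y' ∧ steps σ z₂ y' := by
  cases σ with
  | nil => exact ⟨z₂, h ▸ hz, rfl⟩
  | cons θ σ' =>
    obtain ⟨t, ht, hs⟩ := h
    cases θ with
    | write w => exact ⟨y, List.Sublist.refl y, t, ht.trans (hz.append_right w), hs⟩
    | read u => exact ⟨y, List.Sublist.refl y, t, ht.trans hz, hs⟩

lemma main_fwd :
    ∀ (σ : List (Act α)) (x x' y : List α), x' <+ x → steps σ x' y →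
      rea σ <+ x ++ wri σ ∧ y <+ ominus (x ++ wri σ) (rea σ) := by
  intro σ
  induction σ with
  | nil =>
    intro x x' y hx h
    simp only [rea, wri, List.append_nil, ominus_nil]
    exact ⟨List.nil_sublist x, h ▸ hx⟩
  | cons θ σ' ih =>
    intro x x' y hx h
    obtain ⟨t, ht, hs⟩ := h
    cases θ with
    | write w =>
      have ht' : t <+ x ++ w := ht.trans (hx.append_right w)
      obtain ⟨h1, h2⟩ := ih (x ++ w) t y ht' hs
      simp only [rea, wri, ← List.append_assoc]
      exact ⟨h1, h2⟩
    | read u =>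
      have htx : u ++ t <+ x := ht.trans hx
      have hu : u <+ x := (List.sublist_append_left u t).trans htx
      have ht' : t <+ ominus x u := sublist_ominus x u t htx
      obtain ⟨h1, h2⟩ := ih (ominus x u) t y ht' hs
      have hux : u <+ x ++ wri σ' := hu.trans (List.sublist_append_left x _)
      have key : ominus (x ++ wri σ') (u ++ rea σ')
          = ominus (ominus x u ++ wri σ') (rea σ') := by
        rw [ominus_append_left _ u _ hux, ominus_append_right _ x u hu]
      constructor
      · show u ++ rea σ' <+ x ++ wri σ'
        calc u ++ rea σ' <+ u ++ (ominus x u ++ wri σ') := h1.append_left u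
          _ = (u ++ ominus x u) ++ wri σ' := (List.append_assoc u _ _).symm
          _ <+ x ++ wri σ' := (append_ominus_sublist x u hu).append_right _
      · show y <+ ominus (x ++ wri σ') (u ++ rea σ')
        rw [key]; exact h2

lemma main_rev :
    ∀ (σ : List (Act α)) (x y : List α), (∃ z, steps σ x z) →
      rea σ <+ x ++ wri σ → y <+ ominus (x ++ wri σ) (rea σ) →
      ∃ x', x' <+ x ∧ steps σ x' y := by
  intro σ
  induction σ with
  | nil =>
    intro x y _ _ hy
    simp only [rea, wri, List.append_nil, ominus_nil] at hy
    exact ⟨y, hy, rfl⟩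
  | cons θ σ' ih =>
    intro x y henab hrea hy
    obtain ⟨z, t, ht, hs⟩ := henab
    cases θ with
    | write w =>
      have ht' : t <+ x ++ w := ht
      obtain ⟨z', _, hz'⟩ := steps_mono σ' t (x ++ w) z hs ht'
      simp only [rea, wri, ← List.append_assoc] at hrea hy
      obtain ⟨x'', hx'', hst⟩ := ih (x ++ w) y ⟨z', hz'⟩ hrea hy
      exact ⟨x, List.Sublist.refl x, x'', hx'', hst⟩
    | read u =>
      have htx : u ++ t <+ x := ht
      have hu : u <+ x := (List.sublist_append_left u t).trans htx
      have ht' : t <+ ominus x u := sublist_ominus x u t htx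
      obtain ⟨z', _, hz'⟩ := steps_mono σ' t (ominus x u) z hs ht'
      simp only [rea, wri] at hrea hy
      have hux : u <+ x ++ wri σ' := hu.trans (List.sublist_append_left x _)
      have key : ominus (x ++ wri σ') (u ++ rea σ')
          = ominus (ominus x u ++ wri σ') (rea σ') := by
        rw [ominus_append_left _ u _ hux, ominus_append_right _ x u hu]
      have hrea' : rea σ' <+ ominus x u ++ wri σ' := by
        have := sublist_ominus (x ++ wri σ') u (rea σ') hrea
        rwa [ominus_append_right _ x u hu] at this
      rw [key] at hy
      obtain ⟨x'', hx'', hst⟩ := ih (ominus x u) y ⟨z', hz'⟩ hrea' hy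
      refine ⟨x, List.Sublist.refl x, x'', ?_, hst⟩
      calc u ++ x'' <+ u ++ ominus x u := hx''.append_left u
        _ <+ x := append_ominus_sublist x u hu

end AuxLemmas

/-- forward characterisation of lossy runs:
`∃ x' ⊑ x, x' →^σ y` iff `σ` is enabled from `x`, `rea(σ) ⊑ x·wri(σ)` and
`y ⊑ (x·wri(σ)) ⊖ rea(σ)`. -/
theorem steps_iff_ominus {α : Type*} [DecidableEq α]
    (σ : List (Act α)) (x y : List α) :
    (∃ x' : List α, x' <+ x ∧ steps σ x' y) ↔
    ((∃ z : List α, steps σ x z) ∧ rea σ <+ x ++ wri σ ∧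
      y <+ ominus (x ++ wri σ) (rea σ)) := by
  constructor
  · rintro ⟨x', hx', hst⟩
    obtain ⟨z, _, hz⟩ := steps_mono σ x' x y hst hx'
    obtain ⟨h1, h2⟩ := main_fwd σ x x' y hx' hst
    exact ⟨⟨z, hz⟩, h1, h2⟩
  · rintro ⟨henab, hrea, hy⟩
    exact main_rev σ x y henab hrea hy
end
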